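/- Suppose (D) is strongly feasible, (P) is feasible, and θ = θ_d (the common optimal value). Then ker A(θ) ∩ (K̄ \ {0}) ≠ ∅, and for any nonzero (x,τ,ρ) in this set, τ > 0 and (1/τ)x is an optimal solution of (P). -/

import Mathlib

open scoped RealInnerProductSpace


lemma stmt13_mem_K_iff {E : Type*} [NormedAddCommGroup E] [InnerProductSpace ℝ E]
    {K : Set E} (h : {s : E | ∀ z ∈ K, 0 ≤ ⟪s, z⟫} = K) {x : E} :
    x ∈ K ↔ ∀ z ∈ K, 0 ≤ ⟪x, z⟫ := by conv_lhs => rw [← h, Set.mem_setOf_eq]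

lemma stmt13_add_mem {E : Type*} [NormedAddCommGroup E] [InnerProductSpace ℝ E]
    {K : Set E} (hKconv : Convex ℝ K)
    (hKcone : ∀ z ∈ K, ∀ t : ℝ, 0 ≤ t → t • z ∈ K) {z w : E}
    (hz : z ∈ K) (hw : w ∈ K) : z + w ∈ K := by
  have h := hKconv hz hw (by norm_num : (0:ℝ) ≤ 1/2) (by norm_num : (0:ℝ) ≤ 1/2)
    (by norm_num)
  have h2 := hKcone _ h 2 (by norm_num)
  have : (2:ℝ) • ((1/2:ℝ) • z + (1/2:ℝ) • w) = z + w := by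
    rw [smul_add, smul_smul, smul_smul]; norm_num
  rwa [this] at h2

lemma stmt13_interior_bound {E : Type*} [NormedAddCommGroup E] [InnerProductSpace ℝ E]
    {K : Set E} (hsd : {s : E | ∀ z ∈ K, 0 ≤ ⟪s, z⟫} = K)
    {s : E} (hs : s ∈ interior K) :
    ∃ ε > 0, ∀ x ∈ K, ε * ‖x‖ ≤ ⟪s, x⟫ := by
  obtain ⟨ε, hε, hball⟩ := Metric.isOpen_iff.mp isOpen_interior s hs
  refine ⟨ε/2, by positivity, fun x hx => ?_⟩
  rcases eq_or_ne x 0 with rfl | hx0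
  · simp
  · have hxK : ∀ z ∈ K, 0 ≤ ⟪x, z⟫ := (stmt13_mem_K_iff hsd).mp hx
    have hxn : (0:ℝ) < ‖x‖ := norm_pos_iff.mpr hx0
    set u := s - (ε/2) • (‖x‖⁻¹ • x) with hu
    have huK : u ∈ K := by
      apply interior_subset
      apply hball
      rw [Metric.mem_ball, dist_eq_norm]
      have : u - s = -((ε/2) • (‖x‖⁻¹ • x)) := by rw [hu]; abel
      rw [this, norm_neg, norm_smul, norm_smul, norm_inv, norm_norm]
      rw [Real.norm_eq_abs, abs_of_pos (by positivity : (0:ℝ) < ε/2)]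
      rw [inv_mul_cancel₀ hxn.ne']
      linarith
    have h0 := hxK u huK
    rw [hu, inner_sub_right, real_inner_smul_right, real_inner_smul_right,
      real_inner_self_eq_norm_mul_norm] at h0
    have : ‖x‖⁻¹ * (‖x‖ * ‖x‖) = ‖x‖ := by field_simp
    rw [this] at h0
    rw [real_inner_comm]
    linarith


lemma stmt13_closed {E : Type*} [NormedAddCommGroup E] [InnerProductSpace ℝ E]
    [FiniteDimensional ℝ E] {m : ℕ} {K : Set E} (hKclosed : IsClosed K)
    (A : E →ₗ[ℝ] EuclideanSpace ℝ (Fin m)) (c : E)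
    {ε : ℝ} (hε : 0 < ε) {y0 : EuclideanSpace ℝ (Fin m)}
    (hbnd : ∀ x ∈ K, ε * ‖x‖ ≤ ⟪c, x⟫ - ⟪y0, A x⟫) :
    IsClosed {p : EuclideanSpace ℝ (Fin m) × ℝ | ∃ x ∈ K, A x = p.1 ∧ ⟪c, x⟫ ≤ p.2} := by
  have hAcont : Continuous A := A.continuous_of_finiteDimensional
  apply IsSeqClosed.isClosed
  intro pn p hmem htend
  choose x hxK hAx hcx using hmem
  -- the bounding sequence converges, hence is bounded above
  have htend1 : Filter.Tendsto (fun n => (pn n).1) Filter.atTop (nhds p.1) :=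
    (continuous_fst.tendsto p).comp htend
  have htend2 : Filter.Tendsto (fun n => (pn n).2) Filter.atTop (nhds p.2) :=
    (continuous_snd.tendsto p).comp htend
  have htendq : Filter.Tendsto (fun n => (pn n).2 - ⟪y0, (pn n).1⟫) Filter.atTop
      (nhds (p.2 - ⟪y0, p.1⟫)) := htend2.sub ((continuous_const.inner continuous_id).tendsto p.1 |>.comp htend1)
  obtain ⟨R, hR⟩ := htendq.bddAbove_range
  have hxb : ∀ n, ‖x n‖ ≤ R / ε := by
    intro n
    have h1 := hbnd (x n) (hxK n)
    rw [hAx n] at h1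
    have h2 : (pn n).2 - ⟪y0, (pn n).1⟫ ≤ R := hR ⟨n, rfl⟩
    have h3 : ⟪c, x n⟫ ≤ (pn n).2 := hcx n
    rw [le_div_iff₀ hε, mul_comm]
    linarith
  have hcomp : IsCompact (Metric.closedBall (0:E) (R/ε)) := isCompact_closedBall _ _
  obtain ⟨a, _, φ, hφ, hφt⟩ := hcomp.tendsto_subseq
    (fun n => Metric.mem_closedBall.mpr (by simpa using hxb n))
  have haK : a ∈ K := hKclosed.mem_of_tendsto hφt
    (Filter.Eventually.of_forall fun k => hxK (φ k))
  refine ⟨a, haK, ?_, ?_⟩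
  · have h1 : Filter.Tendsto (fun k => A (x (φ k))) Filter.atTop (nhds (A a)) :=
      (hAcont.tendsto a).comp hφt
    have h2 : Filter.Tendsto (fun k => A (x (φ k))) Filter.atTop (nhds p.1) := by
      simp only [hAx]
      exact htend1.comp hφ.tendsto_atTop
    exact tendsto_nhds_unique h1 h2
  · have h1 : Filter.Tendsto (fun k => ⟪c, x (φ k)⟫) Filter.atTop (nhds ⟪c, a⟫) :=
      ((continuous_const.inner continuous_id).tendsto a).comp hφt
    have h2 : Filter.Tendsto (fun k => (pn (φ k)).2) Filter.atTop (nhds p.2) :=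
      htend2.comp hφ.tendsto_atTop
    exact le_of_tendsto_of_tendsto h1 h2
      (Filter.Eventually.of_forall fun k => hcx (φ k))

/-- Suppose (D) is strongly feasible, (P) is feasible, and `θ` equals
the optimal value `θ_d = sup {b^⊤y : c − A*y ∈ K}`.  Then `ker A(θ) ∩ (K̄ \ {0})` is
nonempty, and every nonzero `(x,τ,ρ)` in `ker A(θ) ∩ K̄` has `τ > 0` and `(1/τ)x` an
optimal solution of (P). -/
theorem stmt13 {E : Type*} [NormedAddCommGroup E] [InnerProductSpace ℝ E]
    [FiniteDimensional ℝ E] {m : ℕ} (K : Set E)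
    (hKclosed : IsClosed K) (hKconv : Convex ℝ K)
    (hKcone : ∀ z ∈ K, ∀ t : ℝ, 0 ≤ t → t • z ∈ K)
    (hKint : (interior K).Nonempty)
    (hKselfdual : {s : E | ∀ z ∈ K, 0 ≤ ⟪s, z⟫} = K)
    (A : E →ₗ[ℝ] EuclideanSpace ℝ (Fin m)) (b : EuclideanSpace ℝ (Fin m)) (c : E)
    (θ : ℝ)
    (hDsf : ∃ y, c - (LinearMap.adjoint A) y ∈ interior K)
    (hPfeas : ∃ x, A x = b ∧ x ∈ K)
    (hθ : (θ : EReal) =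
      sSup {v : EReal | ∃ y, c - (LinearMap.adjoint A) y ∈ K ∧ v = (⟪b, y⟫ : EReal)}) :
    (∃ x : E, ∃ τ ρ : ℝ, A x = τ • b ∧ ⟪c, x⟫ - τ * θ + ρ = 0 ∧
      x ∈ K ∧ 0 ≤ τ ∧ 0 ≤ ρ ∧ ¬(x = 0 ∧ τ = 0 ∧ ρ = 0)) ∧
    (∀ (x : E) (τ ρ : ℝ), A x = τ • b → ⟪c, x⟫ - τ * θ + ρ = 0 →
      x ∈ K → 0 ≤ τ → 0 ≤ ρ → ¬(x = 0 ∧ τ = 0 ∧ ρ = 0) →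
      0 < τ ∧ A (τ⁻¹ • x) = b ∧ τ⁻¹ • x ∈ K ∧
        ∀ x' : E, A x' = b → x' ∈ K → ⟪c, τ⁻¹ • x⟫ ≤ ⟪c, x'⟫) := by
  obtain ⟨y0, hy0⟩ := hDsf
  have hy0K : c - (LinearMap.adjoint A) y0 ∈ K := interior_subset hy0
  obtain ⟨ε, hε, hbnd⟩ := stmt13_interior_bound hKselfdual hy0
  have h0K : (0:E) ∈ K := by
    obtain ⟨z, hz⟩ := hKint
    simpa using hKcone z (interior_subset hz) 0 le_rfl
  -- dual values are ≤ θ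
  have hlb : ∀ y, c - (LinearMap.adjoint A) y ∈ K → ⟪b, y⟫ ≤ θ := by
    intro y hy
    have : ((⟪b, y⟫ : ℝ) : EReal) ≤ (θ : EReal) := by
      rw [hθ]; exact le_sSup ⟨y, hy, rfl⟩
    exact EReal.coe_le_coe_iff.mp this
  -- weak duality: θ ≤ primal values
  have hub : ∀ x' : E, A x' = b → x' ∈ K → θ ≤ ⟪c, x'⟫ := by
    intro x' hA' hx'
    have : (θ : EReal) ≤ ((⟪c, x'⟫ : ℝ) : EReal) := by
      rw [hθ]
      apply sSup_le
      rintro v ⟨y, hy, rfl⟩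
      rw [EReal.coe_le_coe_iff]
      have h1 := (stmt13_mem_K_iff hKselfdual).mp hy x' hx'
      rw [inner_sub_left, LinearMap.adjoint_inner_left, hA'] at h1
      have h2 : ⟪b, y⟫ = ⟪y, b⟫ := real_inner_comm _ _
      linarith
    exact EReal.coe_le_coe_iff.mp this
  -- the shifted image cone
  set S : Set (EuclideanSpace ℝ (Fin m) × ℝ) :=
    {p | ∃ x ∈ K, A x = p.1 ∧ ⟪c, x⟫ ≤ p.2} with hS
  have hSconv : Convex ℝ S := by
    rintro p ⟨xp, hxp, hAp, hcp⟩ q ⟨xq, hxq, hAq, hcq⟩ a a' ha ha' haa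
    refine ⟨a • xp + a' • xq, hKconv hxp hxq ha ha' haa, ?_, ?_⟩
    · simp only [map_add, map_smul, hAp, hAq, Prod.fst_add, Prod.smul_fst]
    · simp only [inner_add_right, real_inner_smul_right, Prod.snd_add, Prod.smul_snd,
        smul_eq_mul]
      have := mul_le_mul_of_nonneg_left hcp ha
      have := mul_le_mul_of_nonneg_left hcq ha'
      linarith
  have hScone : ∀ p ∈ S, ∀ t : ℝ, 0 ≤ t → t • p ∈ S := by
    rintro p ⟨xp, hxp, hAp, hcp⟩ t ht
    refine ⟨t • xp, hKcone xp hxp t ht, ?_, ?_⟩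
    · simp [map_smul, hAp]
    · simp only [real_inner_smul_right, Prod.smul_snd, smul_eq_mul]
      exact mul_le_mul_of_nonneg_left hcp ht
  have hSclosed : IsClosed S := by
    apply stmt13_closed hKclosed A c hε
    intro x hx
    have h1 := hbnd x hx
    rw [inner_sub_left, LinearMap.adjoint_inner_left] at h1
    linarith
  -- key claim: (b, θ) ∈ S
  have hbθ : (b, θ) ∈ S := by
    by_contra hmem
    obtain ⟨f, u, hfu, hsep⟩ := geometric_hahn_banach_point_closed hSconv hSclosed hmem
    have h00 : ((0 : EuclideanSpace ℝ (Fin m)), (0:ℝ)) ∈ S :=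
      ⟨0, h0K, by simp, by simp⟩
    have hu0 : u < 0 := by
      have := hsep _ h00; rwa [Prod.mk_zero_zero, map_zero] at this
    have hnn : ∀ p ∈ S, 0 ≤ f p := by
      intro p hp
      by_contra hneg
      push_neg at hneg
      have ht : (0:ℝ) < (u - 1) / f p := div_pos_of_neg_of_neg (by linarith) hneg
      have := hsep _ (hScone p hp _ ht.le)
      rw [map_smul, smul_eq_mul, div_mul_cancel₀ _ hneg.ne] at this
      linarith
    set μ := f (0, 1) with hμdef
    set y' := (InnerProductSpace.toDual ℝ (EuclideanSpace ℝ (Fin m))).symm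
      (f.comp (ContinuousLinearMap.inl ℝ (EuclideanSpace ℝ (Fin m)) ℝ)) with hy'
    have hdecomp : ∀ (z : EuclideanSpace ℝ (Fin m)) (t : ℝ), f (z, t) = ⟪y', z⟫ + t * μ := by
      intro z t
      rw [hy', InnerProductSpace.toDual_symm_apply]
      have h1 : (z, t) = (z, (0:ℝ)) + t • ((0 : EuclideanSpace ℝ (Fin m)), (1:ℝ)) := by
        simp [Prod.ext_iff]
      rw [h1, map_add, map_smul, smul_eq_mul]
      rfl
    have hμ : 0 ≤ μ := by
      have := hnn (0, 1) ⟨0, h0K, by simp, by simp⟩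
      rwa [hμdef]
    have hkey : ∀ x ∈ K, 0 ≤ ⟪y', A x⟫ + ⟪c, x⟫ * μ := by
      intro x hx
      have := hnn (A x, ⟪c, x⟫) ⟨x, hx, rfl, le_rfl⟩
      rwa [hdecomp] at this
    have hmemK : (LinearMap.adjoint A) y' + μ • c ∈ K := by
      rw [stmt13_mem_K_iff hKselfdual]
      intro z hz
      rw [inner_add_left, LinearMap.adjoint_inner_left, real_inner_smul_left]
      have := hkey z hz
      linarith [this]
    have hneg : ⟪y', b⟫ + θ * μ < 0 := by
      have := hfu
      rw [hdecomp] at this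
      linarith
    rcases hμ.lt_or_eq with hμpos | hμ0
    · -- μ > 0 : build a better dual point
      set y := (-μ⁻¹) • y' with hy
      have hfeas : c - (LinearMap.adjoint A) y ∈ K := by
        have h1 : c - (LinearMap.adjoint A) y
            = μ⁻¹ • ((LinearMap.adjoint A) y' + μ • c) := by
          rw [hy, map_smul]
          rw [smul_add, smul_smul, inv_mul_cancel₀ hμpos.ne']
          module
        rw [h1]
        exact hKcone _ hmemK _ (by positivity)
      have hval : θ < ⟪b, y⟫ := by
        have hb' : ⟪b, y'⟫ = ⟪y', b⟫ := real_inner_comm _ _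
        rw [hy, real_inner_smul_right, hb']
        have h2 : θ < (-⟪y', b⟫) / μ := (lt_div_iff₀ hμpos).mpr (by linarith)
        have h3 : -μ⁻¹ * ⟪y', b⟫ = (-⟪y', b⟫) / μ := by field_simp
        linarith
      exact absurd (hlb y hfeas) (not_le.mpr hval)
    · -- μ = 0 : dual unbounded
      rw [← hμ0] at hmemK hneg
      simp only [zero_smul, add_zero, mul_zero] at hmemK hneg
      set t := (θ + 1 - ⟪b, y0⟫) / (-⟪y', b⟫) with ht
      have hden : (0:ℝ) < -⟪y', b⟫ := by linarith
      have htpos : 0 < t := by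
        apply div_pos _ hden
        have := hlb y0 hy0K
        linarith
      set y1 := y0 - t • y' with hy1
      have hfeas : c - (LinearMap.adjoint A) y1 ∈ K := by
        have h1 : c - (LinearMap.adjoint A) y1
            = (c - (LinearMap.adjoint A) y0) + t • ((LinearMap.adjoint A) y') := by
          rw [hy1, map_sub, map_smul]; abel
        rw [h1]
        exact stmt13_add_mem hKconv hKcone hy0K (hKcone _ hmemK t htpos.le)
      have hval : ⟪b, y1⟫ = θ + 1 := by
        rw [hy1, inner_sub_right, real_inner_smul_right]
        have hb' : ⟪b, y'⟫ = ⟪y', b⟫ := real_inner_comm _ _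
        rw [hb']
        have h4 : t * (-⟪y', b⟫) = θ + 1 - ⟪b, y0⟫ := div_mul_cancel₀ _ hden.ne'
        rw [mul_neg] at h4
        linarith
      have := hlb y1 hfeas
      rw [hval] at this
      linarith
  -- extract the optimal solution
  obtain ⟨xs, hxsK, hAxs, hcxs⟩ := hbθ
  constructor
  · exact ⟨xs, 1, θ - ⟪c, xs⟫, by simpa using hAxs, by ring, hxsK, zero_le_one,
      by linarith [hcxs], fun h => one_ne_zero h.2.1⟩
  · intro x τ ρ hAx hlin hxK hτ hρ hnz
    have hτpos : 0 < τ := by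
      rcases hτ.lt_or_eq with h | h
      · exact h
      · exfalso
        rw [← h] at hAx hlin
        rw [zero_smul] at hAx
        rw [zero_mul, sub_zero] at hlin
        have hx0 : x ≠ 0 := by
          intro hx0
          rw [hx0] at hlin
          simp at hlin
          exact hnz ⟨hx0, h.symm, by linarith [hlin]⟩
        have h1 := hbnd x hxK
        rw [inner_sub_left, LinearMap.adjoint_inner_left, hAx, inner_zero_right,
          sub_zero] at h1
        have h2 : (0:ℝ) < ε * ‖x‖ := mul_pos hε (norm_pos_iff.mpr hx0)
        linarith
    refine ⟨hτpos, ?_, hKcone x hxK τ⁻¹ (inv_nonneg.mpr hτpos.le), ?_⟩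
    · rw [map_smul, hAx, smul_smul, inv_mul_cancel₀ hτpos.ne', one_smul]
    · intro x' hA' hx'
      have h1 := hub x' hA' hx'
      rw [real_inner_smul_right]
      have h2 : ⟪c, x⟫ = τ * θ - ρ := by linarith
      rw [h2]
      have h3 : τ⁻¹ * (τ * θ - ρ) = θ - τ⁻¹ * ρ := by
        field_simp
      rw [h3]
      have : 0 ≤ τ⁻¹ * ρ := mul_nonneg (inv_nonneg.mpr hτpos.le) hρ
      linarith
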